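/- Let w_0 be the longest element of the finite Weyl group W acting on the set of alcoves, and for an alcove A let A ∈ 𝒜_β^- mean A = A_x for some x ∈ W with A ⊂ H_{β,0}^-. Then for β ∈ R^+ and an alcove A: w_0.(β↑A) ∈ 𝒜^-_{w_0(β)^+} if and only if A ∈ 𝒜_β^-; and w_0.(β↑A) ∈ w_0(β)^+ ↑ 𝒜^-_{w_0(β)^+} if and only if A ∈ β ↓ 𝒜_β^-. -/

import Mathlib

open Module

section Preliminaries

variable {V : Type*} [AddCommGroup V] [Module ℚ V]

/-- Data of a reduced irreducible root system `R` in a `ℚ`-vector space `V`,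
with positive roots, simple roots, coroots (in the dual space) and highest root. -/
structure RootSystemData (V : Type*) [AddCommGroup V] [Module ℚ V] where
  R : Set V
  Rpos : Set V
  Δ : Set V
  coroot : V → Module.Dual ℚ V
  highest : V
  finite_R : R.Finite
  nonempty_R : R.Nonempty
  pos_subset : Rpos ⊆ R
  simple_subset : Δ ⊆ Rpos
  coroot_self : ∀ α ∈ R, coroot α α = 2
  neg_mem : ∀ α ∈ R, -α ∈ R
  coroot_neg : ∀ α ∈ R, coroot (-α) = -coroot α
  pos_or_neg : ∀ α ∈ R, (α ∈ Rpos ∧ -α ∉ Rpos) ∨ (-α ∈ Rpos ∧ α ∉ Rpos)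
  reflect_mem : ∀ α ∈ R, ∀ β ∈ R, β - coroot α β • α ∈ R
  coroot_int : ∀ α ∈ R, ∀ β ∈ R, ∃ m : ℤ, coroot α β = (m : ℚ)
  reduced : ∀ α ∈ R, (2 : ℚ) • α ∉ R
  pos_comb : ∀ α ∈ Rpos, α ∈ AddSubmonoid.closure Δ
  simple_indep : LinearIndependent ℚ (fun a : Δ => (a : V))
  irreducible : ∀ Δ₁ Δ₂ : Set V, Δ₁ ∪ Δ₂ = Δ → Δ₁.Nonempty → Δ₂.Nonempty →
    (∀ a ∈ Δ₁, ∀ b ∈ Δ₂, coroot a b = 0) → False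
  highest_mem : highest ∈ Rpos
  highest_prop : ∀ α ∈ Rpos, highest - α ∈ AddSubmonoid.closure Δ

/-- The affine reflection `s_{α,n}` on `V*`: `v ↦ v - (⟨α,v⟩ - n) α^∨`. -/
def sAff (α : V) (cα : Module.Dual ℚ V) (n : ℤ) (v : Module.Dual ℚ V) : Module.Dual ℚ V :=
  v - (v α - n) • cα

/-- Negative half space `H⁻_{α,n}`. -/
def Hm (α : V) (n : ℤ) : Set (Module.Dual ℚ V) := {v | v α < (n : ℚ)}

/-- Positive half space `H⁺_{α,n}`. -/
def Hp (α : V) (n : ℤ) : Set (Module.Dual ℚ V) := {v | (n : ℚ) < v α}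

/-- Hyperplane `H_{α,n}`. -/
def Hyp (α : V) (n : ℤ) : Set (Module.Dual ℚ V) := {v | v α = (n : ℚ)}

/-- Alcoves: nonempty open intersections of strips between consecutive root hyperplanes. -/
def IsAlcove (P : RootSystemData V) (A : Set (Module.Dual ℚ V)) : Prop :=
  A.Nonempty ∧ ∃ d : V → ℤ,
    A = {v | ∀ α ∈ P.Rpos, (d α : ℚ) < v α ∧ v α < (d α : ℚ) + 1}

/-- The minimal `m` with `A ⊆ H⁻_{β,m}`. -/
noncomputable def upIdx (β : V) (A : Set (Module.Dual ℚ V)) : ℤ := sInf {m : ℤ | A ⊆ Hm β m}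

/-- The maximal `m` with `A ⊆ H⁺_{β,m}`. -/
noncomputable def downIdx (β : V) (A : Set (Module.Dual ℚ V)) : ℤ := sSup {m : ℤ | A ⊆ Hp β m}

/-- The operation `β↑` on alcoves. -/
noncomputable def up (P : RootSystemData V) (β : V) (A : Set (Module.Dual ℚ V)) :
    Set (Module.Dual ℚ V) := sAff β (P.coroot β) (upIdx β A) '' A

/-- The operation `β↓` on alcoves. -/
noncomputable def down (P : RootSystemData V) (β : V) (A : Set (Module.Dual ℚ V)) :
    Set (Module.Dual ℚ V) := sAff β (P.coroot β) (downIdx β A) '' A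

/-- Contragredient action of a linear automorphism of `V` on `V*`. -/
def dualAct (w : V ≃ₗ[ℚ] V) (v : Module.Dual ℚ V) : Module.Dual ℚ V :=
  v ∘ₗ (w.symm : V →ₗ[ℚ] V)

/-- Generators of the finite Weyl group: the simple reflections on `V`. -/
def weylGens (P : RootSystemData V) : Set (V ≃ₗ[ℚ] V) :=
  {e | ∃ α ∈ P.Δ, ∀ x, e x = x - P.coroot α x • α}

/-- The finite Weyl group. -/
def Weyl (P : RootSystemData V) : Subgroup (V ≃ₗ[ℚ] V) := Subgroup.closure (weylGens P)

-- `w(β)⁺`: the positive root among `±w(β)`.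
open scoped Classical in
noncomputable def wplus (P : RootSystemData V) (w : V ≃ₗ[ℚ] V) (β : V) : V :=
  if w β ∈ P.Rpos then w β else -(w β)

/-- Generators of the affine Weyl group: the simple affine reflections on `V*`. -/
def affGens (P : RootSystemData V) : Set (Equiv.Perm (Module.Dual ℚ V)) :=
  {e | (∃ α ∈ P.Δ, ∀ v, e v = sAff α (P.coroot α) 0 v) ∨
       (∀ v, e v = sAff P.highest (P.coroot P.highest) 1 v)}

/-- The affine Weyl group, acting on `V*`. -/
def AffWeyl (P : RootSystemData V) : Subgroup (Equiv.Perm (Module.Dual ℚ V)) :=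
  Subgroup.closure (affGens P)

/-- The fundamental alcove `A_e`. -/
def Ae (P : RootSystemData V) : Set (Module.Dual ℚ V) :=
  {v | ∀ α ∈ P.Rpos, 0 < v α ∧ v α < 1}

/-- The alcoves `A_x`, `x ∈ W` (finite Weyl group). -/
def finAlc (P : RootSystemData V) : Set (Set (Module.Dual ℚ V)) :=
  {S | ∃ w ∈ Weyl P, S = dualAct w '' Ae P}

/-- `𝒜⁻_β`: finite-Weyl alcoves contained in `H⁻_{β,0}`. -/
def Aminus (P : RootSystemData V) (β : V) : Set (Set (Module.Dual ℚ V)) :=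
  {S | S ∈ finAlc P ∧ S ⊆ Hm β 0}

end Preliminaries

section Lemmas
variable {V : Type*} [AddCommGroup V] [Module ℚ V] (P : RootSystemData V)

lemma zero_not_mem_R : (0:V) ∉ P.R := fun h => by
  have := P.coroot_self 0 h
  simp at this

lemma ind_lemma (t : Finset V) (ht : ↑t ⊆ P.Δ) (c : V → ℚ)
    (h : ∑ v ∈ t, c v • v = 0) : ∀ v ∈ t, c v = 0 := by
  intro v hv
  have hinj : Function.Injective (fun x : {x // x ∈ t} => (⟨x.1, ht x.2⟩ : P.Δ)) := by
    intro a b hab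
    have h' := congrArg Subtype.val hab
    exact Subtype.ext h'
  set s : Finset P.Δ := t.attach.map ⟨_, hinj⟩ with hs
  have hsum : ∑ i ∈ s, c i.1 • (i.1 : V) = 0 := by
    rw [hs, Finset.sum_map]
    simpa [Finset.sum_attach t (fun v => c v • v)] using h
  have := linearIndependent_iff'.mp P.simple_indep s (fun i => c i.1) hsum
    ⟨v, ht hv⟩ (by
      rw [hs, Finset.mem_map]
      exact ⟨⟨v, hv⟩, Finset.mem_attach _ _, rfl⟩)
  exact this

lemma exists_rep {β : V} (hβ : β ∈ P.Rpos) :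
    ∃ l : Multiset V, (∀ x ∈ l, x ∈ P.Δ) ∧ l.sum = β :=
  AddSubmonoid.exists_multiset_of_mem_closure (P.pos_comb β hβ)

/-- The reflection in a root as a linear equivalence. -/
noncomputable def reflEquiv (α : V) (cα : Module.Dual ℚ V) (h2 : cα α = 2) : V ≃ₗ[ℚ] V :=
  LinearEquiv.ofLinear (LinearMap.id - cα.smulRight α) (LinearMap.id - cα.smulRight α)
    (by ext x; simp [h2, smul_smul]; module)
    (by ext x; simp [h2, smul_smul]; module)

lemma reflEquiv_apply (α : V) (cα : Module.Dual ℚ V) (h2 : cα α = 2) (x : V) :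
    reflEquiv α cα h2 x = x - cα x • α := rfl

lemma genWeyl {α : V} (hα : α ∈ P.Δ) :
    reflEquiv α (P.coroot α) (P.coroot_self α (P.pos_subset (P.simple_subset hα))) ∈ Weyl P :=
  Subgroup.subset_closure ⟨α, hα, fun _ => rfl⟩

lemma weyl_maps {w : V ≃ₗ[ℚ] V} (hw : w ∈ Weyl P) :
    (∀ ρ ∈ P.R, w ρ ∈ P.R) ∧ (∀ ρ ∈ P.R, w.symm ρ ∈ P.R) := by
  induction hw using Subgroup.closure_induction with
  | mem x hx =>
      obtain ⟨α, hα, hf⟩ := hx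
      have hαR := P.pos_subset (P.simple_subset hα)
      have hinv : ∀ y, x (x y) = y := by
        intro y
        rw [hf, hf]
        simp only [map_sub, map_smul, smul_eq_mul, P.coroot_self α hαR]
        module
      constructor
      · intro ρ hρ; rw [hf]; exact P.reflect_mem α hαR ρ hρ
      · intro ρ hρ
        have : x.symm ρ = x ρ := by
          rw [LinearEquiv.symm_apply_eq, hinv]
        rw [this, hf]; exact P.reflect_mem α hαR ρ hρ
  | one => exact ⟨fun ρ hρ => hρ, fun ρ hρ => hρ⟩
  | mul x y hx hy ihx ihy =>
      exact ⟨fun ρ hρ => ihx.1 _ (ihy.1 ρ hρ), fun ρ hρ => ihy.2 _ (ihx.2 ρ hρ)⟩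
  | inv x hx ih => exact ⟨ih.2, ih.1⟩

/-- Reflection in a root, as a plain function. -/
def sref (P : RootSystemData V) (γ : V) : V → V := fun x => x - P.coroot γ x • γ

lemma sref_mem {γ ρ : V} (hγ : γ ∈ P.R) (hρ : ρ ∈ P.R) : sref P γ ρ ∈ P.R :=
  P.reflect_mem γ hγ ρ hρ

lemma sref_invol {γ : V} (hγ : γ ∈ P.R) (x : V) : sref P γ (sref P γ x) = x := by
  simp only [sref, map_sub, map_smul, smul_eq_mul, P.coroot_self γ hγ]
  module

lemma coroot_eval {γ α β : V} (a b : ℚ) :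
    P.coroot γ (a • α + b • β) = a * P.coroot γ α + b * P.coroot γ β := by
  simp

/-- The case `⟨β,α^∨⟩ > 0`, `⟨α,β^∨⟩ = 0` is impossible. -/
lemma sign_aux0 {α β : V} (hα : α ∈ P.R) (hβ : β ∈ P.R)
    (hm : P.coroot α β = 0) {n : ℚ} (hn : P.coroot β α = n) (hn1 : 0 < n) : False := by
  have h2a : P.coroot α α = 2 := P.coroot_self α hα
  have h2b : P.coroot β β = 2 := P.coroot_self β hβ
  -- one step of the double reflection
  have step : ∀ c : ℚ, sref P β (sref P α (sref P β (sref P α ((1:ℚ) • α + c • β)))) =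
      (1:ℚ) • α + (c - 2*n) • β := by
    intro c
    have e1 : sref P α ((1:ℚ) • α + c • β) = (-1 : ℚ) • α + c • β := by
      simp only [sref, coroot_eval, h2a, hm]; module
    have e2 : sref P β ((-1:ℚ) • α + c • β) = (-1 : ℚ) • α + (n - c) • β := by
      simp only [sref, coroot_eval, h2b, hn]; module
    have e3 : sref P α ((-1:ℚ) • α + (n - c) • β) = (1 : ℚ) • α + (n - c) • β := by
      simp only [sref, coroot_eval, h2a, hm]; module
    have e4 : sref P β ((1:ℚ) • α + (n - c) • β) = (1 : ℚ) • α + (c - 2*n) • β := by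
      simp only [sref, coroot_eval, h2b, hn]; module
    rw [e1, e2, e3, e4]
  have hmem : ∀ k : ℕ, (1:ℚ) • α + (-(2*n*k)) • β ∈ P.R := by
    intro k
    induction k with
    | zero => simpa using hα
    | succ k ih =>
        have := sref_mem P hβ (sref_mem P hα (sref_mem P hβ (sref_mem P hα ih)))
        rw [step] at this
        have harg : -(2*n*k) - 2*n = -(2*n*(k+1 : ℕ)) := by push_cast; ring
        rwa [harg] at this
  have hinj : Function.Injective (fun k : ℕ => (1:ℚ) • α + (-(2*n*k)) • β) := by
    intro k l hkl
    have := congrArg (P.coroot β) hkl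
    simp only [coroot_eval, h2b, hn] at this
    have : (k : ℚ) = l := by nlinarith
    exact_mod_cast this
  exact P.finite_R.not_infinite (Set.infinite_of_injective_forall_mem hinj hmem)

/-- The case `⟨β,α^∨⟩ ≥ 1`, `⟨α,β^∨⟩ ≤ -1` is impossible. -/
lemma sign_auxneg {α β : V} (hα : α ∈ P.R) (hβ : β ∈ P.R) {m n : ℚ}
    (hm : P.coroot α β = m) (hn : P.coroot β α = n) (hm1 : m ≤ -1) (hn1 : 1 ≤ n) : False := by
  have h2a : P.coroot α α = 2 := P.coroot_self α hα
  have h2b : P.coroot β β = 2 := P.coroot_self β hβ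
  set t : V → V := fun x => sref P α (sref P β x) with ht
  set c : ℕ → ℚ × ℚ := fun k => Nat.rec ((0:ℚ), (1:ℚ))
    (fun _ p => (m * (n * p.1 + p.2) - p.1, -(n * p.1 + p.2))) k with hc
  have hc0 : c 0 = (0, 1) := rfl
  have hcs : ∀ k, c (k+1) = (m * (n * (c k).1 + (c k).2) - (c k).1, -(n * (c k).1 + (c k).2)) :=
    fun k => rfl
  have tstep : ∀ a b : ℚ, t (a • α + b • β) =
      (m * (n*a + b) - a) • α + (-(n*a + b)) • β := by
    intro a b
    have e1 : sref P β (a • α + b • β) = a • α + (-(n*a + b)) • β := by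
      simp only [sref, coroot_eval, h2b, hn]; module
    have e2 : sref P α (a • α + (-(n*a + b)) • β) =
        (m * (n*a + b) - a) • α + (-(n*a + b)) • β := by
      simp only [sref, coroot_eval, h2a, hm]; module
    show sref P α (sref P β _) = _
    rw [e1, e2]
  have hform : ∀ k : ℕ, t^[k] β = (c k).1 • α + (c k).2 • β := by
    intro k
    induction k with
    | zero => simp [hc0]
    | succ k ih =>
        rw [Function.iterate_succ_apply', ih, tstep, hcs]
  have hmem : ∀ k : ℕ, t^[k] β ∈ P.R := by
    intro k
    induction k with
    | zero => simpa using hβ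
    | succ k ih =>
        rw [Function.iterate_succ_apply']
        exact sref_mem P hα (sref_mem P hβ ih)
  -- growth invariant
  have hinv : ∀ k : ℕ, 0 ≤ (-1:ℚ)^k * (c k).1 ∧ 1 ≤ (-1:ℚ)^k * (c k).2 ∧
      1 ≤ (-1:ℚ)^k * (n * (c k).1 + (c k).2) := by
    intro k
    induction k with
    | zero => simp [hc0]
    | succ k ih =>
        rcases hck : c k with ⟨a, b⟩
        rw [hck] at ih
        obtain ⟨ha, hb, hd⟩ := ih
        dsimp only at ha hb hd
        rw [hcs, hck]
        dsimp only
        have hs : (-1:ℚ)^(k+1) = -((-1:ℚ)^k) := by ring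
        have h1 : (1:ℚ) * 1 ≤ (-m) * ((-1:ℚ)^k * (n*a + b)) :=
          mul_le_mul (by linarith) hd (by linarith) (by linarith)
        have h2 : (1:ℚ) * 1 ≤ n * ((-m) * ((-1:ℚ)^k * (n*a + b))) :=
          mul_le_mul hn1 (by linarith) (by norm_num) (by linarith)
        have h3 : (0:ℚ) ≤ n * ((-1:ℚ)^k * a) := mul_nonneg (by linarith) ha
        refine ⟨?_, ?_, ?_⟩
        · rw [hs]; nlinarith [h1, ha]
        · rw [hs]; nlinarith [hd]
        · rw [hs]; nlinarith [h2, h3, hd]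
  have hane : ∀ k : ℕ, 1 ≤ (-1:ℚ)^(k+1) * (c (k+1)).1 := by
    intro k
    rcases hck : c k with ⟨a, b⟩
    obtain ⟨ha, hb, hd⟩ := hinv k
    rw [hck] at ha hb hd
    dsimp only at ha hb hd
    rw [hcs, hck]
    dsimp only
    have hs : (-1:ℚ)^(k+1) = -((-1:ℚ)^k) := by ring
    have h1 : (1:ℚ) * 1 ≤ (-m) * ((-1:ℚ)^k * (n*a + b)) :=
      mul_le_mul (by linarith) hd (by linarith) (by linarith)
    rw [hs]; nlinarith [h1, ha]
  -- t is injective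
  have htinj : Function.Injective t := by
    have : Function.LeftInverse (fun x => sref P β (sref P α x)) t := by
      intro x
      show sref P β (sref P α (sref P α (sref P β x))) = x
      rw [sref_invol P hα, sref_invol P hβ]
    exact this.injective
  -- k ↦ t^[k] β never returns to β for k ≥ 1
  have hnr : ∀ j : ℕ, t^[j+1] β ≠ β := by
    intro j hj
    rw [hform] at hj
    rcases hcj : c (j+1) with ⟨a, b⟩
    rw [hcj] at hj
    dsimp only at hj
    have h0 : a • α + (b - 1) • β = 0 := by
      have : a • α + b • β - β = 0 := by rw [hj]; abel
      rw [← this]; module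
    have e1 := congrArg (P.coroot α) h0
    have e2 := congrArg (P.coroot β) h0
    simp only [map_add, map_smul, smul_eq_mul, h2a, h2b, hm, hn, map_zero] at e1 e2
    have key : (4 - m*n) * a = 0 := by linear_combination 2*e1 - m*e2
    have hmn : m * n ≤ -1 := by nlinarith
    have ha0 : a = 0 := by
      rcases mul_eq_zero.mp key with h | h
      · linarith
      · exact h
    have := hane j
    rw [hcj] at this
    dsimp only at this
    rw [ha0] at this
    norm_num at this
  have hinj : Function.Injective (fun k : ℕ => t^[k] β) := by
    intro k l hkl
    by_contra hne
    rcases Nat.lt_or_ge k l with h | h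
    · obtain ⟨j, hjl⟩ : ∃ j : ℕ, l = k + (j + 1) := ⟨l - k - 1, by omega⟩
      have : t^[k] (t^[j+1] β) = t^[k] β := by
        rw [← Function.iterate_add_apply, ← hjl]; exact hkl.symm
      exact hnr j (htinj.iterate k this)
    · have hlk : l < k := by omega
      obtain ⟨j, hjl⟩ : ∃ j : ℕ, k = l + (j + 1) := ⟨k - l - 1, by omega⟩
      have : t^[l] (t^[j+1] β) = t^[l] β := by
        rw [← Function.iterate_add_apply, ← hjl]; exact hkl
      exact hnr j (htinj.iterate l this)
  exact P.finite_R.not_infinite (Set.infinite_of_injective_forall_mem hinj hmem)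

lemma multiset_sum_nonpos (s : Multiset ℚ) (h : ∀ x ∈ s, x ≤ 0) : s.sum ≤ 0 := by
  induction s using Multiset.induction with
  | empty => simp
  | cons a s ih =>
      simp only [Multiset.sum_cons]
      have h1 := h a (Multiset.mem_cons_self a s)
      have hs := ih (fun x hx => h x (Multiset.mem_cons_of_mem hx))
      linarith

lemma count_sum_smul [DecidableEq V] (L : Multiset V) (t : Finset V) (hLt : L.toFinset ⊆ t) :
    ∑ v ∈ t, (L.count v : ℚ) • v = L.sum := by
  rw [← Finset.sum_subset hLt (fun x _ hx => by
    rw [Multiset.count_eq_zero_of_notMem (by simpa using hx)]; simp)]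
  rw [show L.sum = (L.map id).sum by simp, Finset.sum_multiset_map_count]
  simp only [id_eq]
  exact Finset.sum_congr rfl (fun x _ => (Nat.cast_smul_eq_nsmul ℚ _ _))


lemma count_sum_card [DecidableEq V] (L : Multiset V) (t : Finset V) (hLt : L.toFinset ⊆ t) :
    ∑ v ∈ t, (L.count v : ℚ) = Multiset.card L := by
  rw [← Finset.sum_subset hLt (fun x _ hx => by
    rw [Multiset.count_eq_zero_of_notMem (by simpa using hx)]; simp)]
  rw [← Nat.cast_sum]
  exact_mod_cast congrArg (fun n : ℕ => (n:ℚ)) (Multiset.toFinset_sum_count_eq L)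

lemma refl_weyl_aux (P : RootSystemData V) : ∀ (N : ℕ) (β : V), β ∈ P.Rpos →
    ∀ l : Multiset V, (∀ x ∈ l, x ∈ P.Δ) → l.sum = β → Multiset.card l = N →
    ∃ s' ∈ Weyl P, ∀ ρ ∈ P.R, s' ρ = ρ - P.coroot β ρ • β := by
  intro N
  induction N using Nat.strong_induction_on with
  | _ N IH =>
  classical
  intro β hβ l hl hsum hcard
  have hβR : β ∈ P.R := P.pos_subset hβ
  have h2b : P.coroot β β = 2 := P.coroot_self β hβR
  by_cases hΔ : β ∈ P.Δ
  · exact ⟨reflEquiv β (P.coroot β) h2b, Subgroup.subset_closure ⟨β, hΔ, fun _ => rfl⟩,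
      fun ρ _ => rfl⟩
  -- find a simple root with positive pairing against β∨
  have hsum2 : (l.map (P.coroot β)).sum = 2 := by
    rw [← map_multiset_sum, hsum, h2b]
  have hex : ∃ x ∈ l, 0 < P.coroot β x := by
    by_contra hcon
    push_neg at hcon
    have : (l.map (P.coroot β)).sum ≤ 0 :=
      multiset_sum_nonpos _ (by
        intro x hx
        obtain ⟨y, hy, rfl⟩ := Multiset.mem_map.mp hx
        exact hcon y hy)
    rw [hsum2] at this; norm_num at this
  obtain ⟨α, hαl, hnpos⟩ := hex
  have hαΔ : α ∈ P.Δ := hl α hαl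
  have hαR : α ∈ P.R := P.pos_subset (P.simple_subset hαΔ)
  have h2a : P.coroot α α = 2 := P.coroot_self α hαR
  set m := P.coroot α β with hmdef
  obtain ⟨mz, hmz⟩ := P.coroot_int α hαR β hβR
  obtain ⟨nz, hnz⟩ := P.coroot_int β hβR α hαR
  have hnz1 : (1:ℚ) ≤ nz := by
    have : (0:ℚ) < nz := by rw [← hnz]; exact hnpos
    exact_mod_cast (by exact_mod_cast this : 0 < nz)
  -- positivity of m
  have hm1 : (1:ℚ) ≤ m := by
    rcases lt_trichotomy m 0 with h | h | h
    · exfalso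
      have hmz1 : (m:ℚ) ≤ -1 := by
        have : mz < 0 := by exact_mod_cast (hmz ▸ h : (mz:ℚ) < 0)
        rw [← hmdef] at hmz
        rw [hmz]; exact_mod_cast (by omega : mz ≤ -1)
      exact sign_auxneg P hαR hβR hmdef.symm hnz hmz1 hnz1
    · exact absurd (sign_aux0 P hαR hβR (hmdef.symm.trans h) hnz (by rw [← hnz]; exact hnpos)) id
    · have : 0 < mz := by exact_mod_cast (hmz ▸ h : (0:ℚ) < mz)
      rw [← hmdef] at hmz
      rw [hmz]; exact_mod_cast (by omega : 1 ≤ mz)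
  -- the reflected root
  set β' := β - m • α with hβ'def
  have hβ'R : β' ∈ P.R := by
    have := P.reflect_mem α hαR β hβR
    rwa [← hmdef] at this
  -- β is not a multiple of α alone
  have hnotmul : ∀ cι : ℕ, β ≠ cι • α := by
    intro cι hc
    rcases (by omega : cι = 0 ∨ cι = 1 ∨ cι = 2 ∨ 3 ≤ cι) with h0 | h0 | h0 | h3
    · rw [h0, zero_smul] at hc
      rw [hc] at hβR
      exact zero_not_mem_R P hβR
    · rw [h0, one_smul] at hc
      exact hΔ (hc ▸ hαΔ)
    · rw [h0, ← Nat.cast_smul_eq_nsmul ℚ 2 α] at hc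
      have : ((2:ℕ):ℚ) • α = (2:ℚ) • α := by norm_num
      rw [this] at hc
      rw [hc] at hβR
      exact P.reduced α hαR hβR
    · have hval : (cι:ℚ) * (nz:ℚ) = 2 := by
        have h := h2b
        nth_rewrite 2 [hc] at h
        rw [← Nat.cast_smul_eq_nsmul ℚ cι α, map_smul, smul_eq_mul, hnz] at h
        exact h
      have h3' : (3:ℚ) ≤ cι := by exact_mod_cast h3
      have hz0 : (0:ℚ) < nz := by nlinarith
      have h1 : (1:ℚ) ≤ nz := by exact_mod_cast (by exact_mod_cast hz0 : 0 < nz)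
      nlinarith
  -- β' is a positive root
  have hβ'pos : β' ∈ P.Rpos := by
    rcases P.pos_or_neg β' hβ'R with h | h
    · exact h.1
    · exfalso
      obtain ⟨l', hl', hsum'⟩ := exists_rep P h.1
      -- l.sum + l'.sum = m • α
      have hLsum : (l + l').sum = m • α := by
        rw [Multiset.sum_add, hsum, hsum']
        rw [hβ'def]; module
      set L := l + l' with hL
      set t : Finset V := L.toFinset ∪ {α} with htdef
      have htΔ : ↑t ⊆ P.Δ := by
        intro v hv
        rcases Finset.mem_union.mp hv with h' | h'
        · rcases Multiset.mem_add.mp (Multiset.mem_toFinset.mp h') with h'' | h''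
          · exact hl v h''
          · exact hl' v h''
        · rw [Finset.mem_singleton.mp h']; exact hαΔ
      have hαt : α ∈ t := Finset.mem_union_right _ (Finset.mem_singleton_self α)
      have hzero : ∑ v ∈ t, (((L.count v : ℚ)) - (if v = α then m else 0)) • v = 0 := by
        rw [Finset.sum_congr rfl (fun v _ => sub_smul _ _ v), Finset.sum_sub_distrib]
        rw [count_sum_smul L t (Finset.subset_union_left), hLsum]
        rw [Finset.sum_congr rfl (fun v _ => by
          rw [ite_smul, zero_smul] : ∀ v ∈ t, (if v = α then m else 0) • v
            = if v = α then m • v else 0)]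
        rw [Finset.sum_ite_eq' t α (fun v => m • v), if_pos hαt]
        simp
      have hcoeff := ind_lemma P t htΔ _ hzero
      have hallα : ∀ x ∈ l, x = α := by
        intro x hx
        by_contra hne
        have hxL : x ∈ L := Multiset.mem_add.mpr (Or.inl hx)
        have hxt : x ∈ t := Finset.mem_union_left _ (Multiset.mem_toFinset.mpr hxL)
        have := hcoeff x hxt
        rw [if_neg hne, sub_zero] at this
        have hc0 : L.count x = 0 := by exact_mod_cast this
        rw [Multiset.count_eq_zero] at hc0
        exact hc0 hxL
      have : β = (Multiset.card l) • α := by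
        rw [← hsum, Multiset.eq_replicate_card.mpr hallα, Multiset.sum_replicate,
          Multiset.card_replicate]
      exact hnotmul _ this
  -- representation of β' and height decrease
  obtain ⟨l₂, hl₂, hsum₂⟩ := exists_rep P hβ'pos
  have hcard₂ : Multiset.card l₂ < N := by
    set t : Finset V := (l.toFinset ∪ l₂.toFinset) ∪ {α} with htdef
    have h1 : l.toFinset ⊆ t := Finset.subset_union_left.trans Finset.subset_union_left
    have h2 : l₂.toFinset ⊆ t :=
      Finset.subset_union_right.trans Finset.subset_union_left
    have htΔ : ↑t ⊆ P.Δ := by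
      intro v hv
      rcases Finset.mem_union.mp hv with h' | h'
      · rcases Finset.mem_union.mp h' with h'' | h''
        · exact hl v (Multiset.mem_toFinset.mp h'')
        · exact hl₂ v (Multiset.mem_toFinset.mp h'')
      · rw [Finset.mem_singleton.mp h']; exact hαΔ
    have hαt : α ∈ t := Finset.mem_union_right _ (Finset.mem_singleton_self α)
    have hzero : ∑ v ∈ t,
        (((l.count v : ℚ)) - (l₂.count v : ℚ) - (if v = α then m else 0)) • v = 0 := by
      rw [Finset.sum_congr rfl (fun v _ => by rw [sub_smul, sub_smul])]
      rw [Finset.sum_sub_distrib, Finset.sum_sub_distrib]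
      rw [count_sum_smul l t h1, count_sum_smul l₂ t h2]
      rw [Finset.sum_congr rfl (fun v _ => by
        rw [ite_smul, zero_smul] : ∀ v ∈ t, (if v = α then m else 0) • v
          = if v = α then m • v else 0)]
      rw [Finset.sum_ite_eq' t α (fun v => m • v), if_pos hαt]
      rw [hsum, hsum₂, hβ'def]
      module
    have hcoeff := ind_lemma P t htΔ _ hzero
    have hsum0 : ∑ v ∈ t,
        (((l.count v : ℚ)) - (l₂.count v : ℚ) - (if v = α then m else 0)) = 0 :=
      Finset.sum_eq_zero hcoeff
    rw [Finset.sum_sub_distrib, Finset.sum_sub_distrib, count_sum_card l t h1,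
      count_sum_card l₂ t h2, Finset.sum_ite_eq' t α (fun _ => m), if_pos hαt] at hsum0
    have hlt : (Multiset.card l₂ : ℚ) < N := by
      rw [← hcard]
      push_cast
      linarith
    exact_mod_cast hlt
  -- inductive hypothesis gives the reflection for β'
  obtain ⟨s₁, hs₁W, hs₁⟩ := IH (Multiset.card l₂) hcard₂ β' hβ'pos l₂ hl₂ hsum₂ rfl
  set eα := reflEquiv α (P.coroot α) h2a with heα
  have heαW : eα ∈ Weyl P := Subgroup.subset_closure ⟨α, hαΔ, fun _ => rfl⟩
  have heα_apply : ∀ x, eα x = x - P.coroot α x • α := fun x => rfl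
  have heα_invol : ∀ x, eα (eα x) = x := fun x => sref_invol P hαR x
  have heαβ' : eα β' = β := by
    rw [heα_apply, hβ'def]
    simp only [map_sub, map_smul, smul_eq_mul, h2a, ← hmdef]
    module
  set s' : V ≃ₗ[ℚ] V := eα * s₁ * eα with hs'def
  have hs'W : s' ∈ Weyl P := mul_mem (mul_mem heαW hs₁W) heαW
  have hs'maps := (weyl_maps P hs'W).1
  have hs'apply : ∀ ρ ∈ P.R, s' ρ = ρ - (P.coroot β' (eα ρ)) • β := by
    intro ρ hρ
    have h1 : eα ρ ∈ P.R := by rw [heα_apply]; exact P.reflect_mem α hαR ρ hρ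
    have hcomp : s' ρ = eα (s₁ (eα ρ)) := rfl
    rw [hcomp, hs₁ _ h1, map_sub, map_smul, heα_invol, heαβ']
  -- the two coroots agree on all roots
  have hq : ∀ ρ ∈ P.R, P.coroot β' (eα ρ) = P.coroot β ρ := by
    intro ρ hρ
    by_contra hne
    set q := P.coroot β' (eα ρ) - P.coroot β ρ with hqdef
    have hq0 : q ≠ 0 := sub_ne_zero.mpr hne
    have hs'β : s' β = -β := by
      rw [hs'apply β hβR]
      have he : eα β = β' := by rw [heα_apply, hβ'def, hmdef]
      rw [he, P.coroot_self β' hβ'R]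
      module
    have hmem : ∀ k : ℕ, ρ + ((k : ℚ) * q) • β ∈ P.R := by
      intro k
      induction k with
      | zero => simpa using hρ
      | succ k ih =>
          have e1 : s' (ρ + ((k:ℚ)*q) • β) = ρ - P.coroot β' (eα ρ) • β - ((k:ℚ)*q) • β := by
            rw [map_add, map_smul, hs'apply ρ hρ, hs'β]; module
          have e2 : sref P β (s' (ρ + ((k:ℚ)*q) • β)) = ρ + (((k:ℚ)+1)*q) • β := by
            rw [e1]
            simp only [sref, map_sub, map_add, map_smul, smul_eq_mul, h2b, hqdef]
            module
          have hmem2 := sref_mem P hβR (hs'maps _ ih)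
          rw [e2] at hmem2
          have hk1 : ((k+1 : ℕ):ℚ) = (k:ℚ)+1 := by push_cast; ring
          rw [hk1]
          exact hmem2
    have hinj : Function.Injective (fun k : ℕ => ρ + ((k:ℚ) * q) • β) := by
      intro k l' hkl
      have hco := congrArg (P.coroot β) hkl
      simp only [map_add, map_smul, smul_eq_mul, h2b] at hco
      have h2q : (k:ℚ) * (q*2) = (l':ℚ) * (q*2) := by linarith
      have := mul_right_cancel₀ (mul_ne_zero hq0 two_ne_zero) h2q
      exact_mod_cast this
    exact P.finite_R.not_infinite (Set.infinite_of_injective_forall_mem hinj hmem)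
  exact ⟨s', hs'W, fun ρ hρ => by rw [hs'apply ρ hρ, hq ρ hρ]⟩

lemma refl_weyl {β : V} (hβ : β ∈ P.Rpos) :
    ∃ s' ∈ Weyl P, ∀ ρ ∈ P.R, s' ρ = ρ - P.coroot β ρ • β := by
  obtain ⟨l, hl, hsum⟩ := exists_rep P hβ
  exact refl_weyl_aux P (Multiset.card l) β hβ l hl hsum rfl

lemma dualAct_apply (w : V ≃ₗ[ℚ] V) (v : Module.Dual ℚ V) (x : V) :
    dualAct w v x = v (w.symm x) := rfl

lemma dualAct_cancel (w : V ≃ₗ[ℚ] V) (z : Module.Dual ℚ V) :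
    dualAct w (dualAct w⁻¹ z) = z := by
  apply LinearMap.ext; intro x
  show z ((w⁻¹).symm (w.symm x)) = z x
  congr 1
  show w.symm.symm (w.symm x) = x
  simp

lemma dualAct_cancel' (w : V ≃ₗ[ℚ] V) (z : Module.Dual ℚ V) :
    dualAct w⁻¹ (dualAct w z) = z := by
  apply LinearMap.ext; intro x
  show z (w.symm ((w⁻¹).symm x)) = z x
  congr 1
  show w.symm (w.symm.symm x) = x
  simp

lemma dualAct_image_comp (w w' : V ≃ₗ[ℚ] V) (S : Set (Module.Dual ℚ V)) :
    dualAct w '' (dualAct w' '' S) = dualAct (w * w') '' S := by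
  rw [← Set.image_comp]
  rfl

lemma dualAct_image_cancel (w : V ≃ₗ[ℚ] V) (S : Set (Module.Dual ℚ V)) :
    dualAct w⁻¹ '' (dualAct w '' S) = S := by
  rw [← Set.image_comp]
  have : (dualAct (V := V) w⁻¹ ∘ dualAct w) = id := funext (fun z => dualAct_cancel' w z)
  rw [this, Set.image_id]

lemma dualAct_image_cancel' (w : V ≃ₗ[ℚ] V) (S : Set (Module.Dual ℚ V)) :
    dualAct w '' (dualAct w⁻¹ '' S) = S := by
  rw [← Set.image_comp]
  have : (dualAct (V := V) w ∘ dualAct w⁻¹) = id := funext (fun z => dualAct_cancel w z)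
  rw [this, Set.image_id]

lemma finAlc_dualAct {w : V ≃ₗ[ℚ] V} (hw : w ∈ Weyl P) {S : Set (Module.Dual ℚ V)}
    (hS : S ∈ finAlc P) : dualAct w '' S ∈ finAlc P := by
  obtain ⟨y, hy, rfl⟩ := hS
  exact ⟨w * y, mul_mem hw hy, (dualAct_image_comp w y _)⟩

lemma sAff_apply' (β : V) (cβ : Module.Dual ℚ V) (n : ℤ) (v : Module.Dual ℚ V) (x : V) :
    sAff β cβ n v x = v x - (v β - n) * cβ x := by
  simp [sAff, smul_eq_mul]

lemma sAff_invol {β : V} {cβ : Module.Dual ℚ V} (h2 : cβ β = 2) (n : ℤ)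
    (v : Module.Dual ℚ V) : sAff β cβ n (sAff β cβ n v) = v := by
  apply LinearMap.ext; intro x
  simp only [sAff_apply', h2]
  ring

lemma sAff_image_invol {β : V} {cβ : Module.Dual ℚ V} (h2 : cβ β = 2) (n : ℤ)
    (A : Set (Module.Dual ℚ V)) : sAff β cβ n '' (sAff β cβ n '' A) = A := by
  rw [← Set.image_comp]
  have : (sAff β cβ n ∘ sAff β cβ n) = id := funext (fun v => sAff_invol h2 n v)
  rw [this, Set.image_id]

lemma sAff_eval_self {β : V} {cβ : Module.Dual ℚ V} (h2 : cβ β = 2) (n : ℤ)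
    (v : Module.Dual ℚ V) : sAff β cβ n v β = 2 * n - v β := by
  rw [sAff_apply', h2]; ring

lemma unit_interval_eq {p q : ℤ} {x : ℚ} (hp1 : (p:ℚ) < x) (hp2 : x < p+1)
    (hq1 : (q:ℚ) < x) (hq2 : x < q+1) : p = q := by
  have h1 : ⌊x⌋ = p := Int.floor_eq_iff.mpr ⟨le_of_lt hp1, by exact_mod_cast hp2⟩
  have h2 : ⌊x⌋ = q := Int.floor_eq_iff.mpr ⟨le_of_lt hq1, by exact_mod_cast hq2⟩
  rw [← h1, h2]

lemma upIdx_eq {β : V} {A : Set (Module.Dual ℚ V)} (hne : A.Nonempty) {k : ℤ}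
    (h : ∀ v ∈ A, (k:ℚ) < v β ∧ v β < k+1) : upIdx β A = k + 1 := by
  have hset : {m : ℤ | A ⊆ Hm β m} = Set.Ici (k+1) := by
    ext n
    simp only [Set.mem_setOf_eq, Set.mem_Ici]
    constructor
    · intro hn
      obtain ⟨v, hv⟩ := hne
      have h1 := (h v hv).1
      have h2 : v β < (n:ℚ) := hn hv
      have hkn : (k:ℚ) < n := lt_trans h1 h2
      exact_mod_cast Int.add_one_le_iff.mpr (by exact_mod_cast hkn)
    · intro hn v hv
      show v β < (n:ℚ)
      have := (h v hv).2
      have hcast : ((k:ℚ)+1) ≤ n := by exact_mod_cast hn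
      linarith
  rw [upIdx, hset, csInf_Ici]

lemma downIdx_eq {β : V} {A : Set (Module.Dual ℚ V)} (hne : A.Nonempty) {k : ℤ}
    (h : ∀ v ∈ A, (k:ℚ) < v β ∧ v β < k+1) : downIdx β A = k := by
  have hset : {m : ℤ | A ⊆ Hp β m} = Set.Iic k := by
    ext n
    simp only [Set.mem_setOf_eq, Set.mem_Iic]
    constructor
    · intro hn
      obtain ⟨v, hv⟩ := hne
      have h2 := (h v hv).2
      have h1 : (n:ℚ) < v β := hn hv
      have : (n:ℚ) < k+1 := lt_trans h1 h2
      have hnk : (n:ℚ) < (k:ℚ)+1 := this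
      have : (n:ℚ) < ((k+1 : ℤ):ℚ) := by push_cast; linarith
      have := Int.lt_add_one_iff.mp (by exact_mod_cast this)
      exact this
    · intro hn v hv
      show (n:ℚ) < v β
      have := (h v hv).1
      have hcast : (n:ℚ) ≤ k := by exact_mod_cast hn
      linarith
  rw [downIdx, hset, csSup_Iic]

lemma finAlc_strip {S : Set (Module.Dual ℚ V)} (hS : S ∈ finAlc P) {δ : V}
    (hδ : δ ∈ P.Rpos) :
    (∀ v ∈ S, 0 < v δ ∧ v δ < 1) ∨ (∀ v ∈ S, -1 < v δ ∧ v δ < 0) := by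
  obtain ⟨w, hw, rfl⟩ := hS
  have hδR := P.pos_subset hδ
  have hws : w.symm δ ∈ P.R := (weyl_maps P hw).2 δ hδR
  rcases P.pos_or_neg _ hws with h | h
  · left
    rintro v ⟨u, hu, rfl⟩
    exact hu _ h.1
  · right
    rintro v ⟨u, hu, rfl⟩
    have h1 := hu _ h.1
    rw [map_neg] at h1
    have h2 : (dualAct w u) δ = u (w.symm δ) := rfl
    constructor <;> rw [h2] <;> linarith [h1.1, h1.2]

/-- Transfer: applying the linear reflection `s_{β,0}` to a finite Weyl alcove
gives a finite Weyl alcove. -/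
lemma transfer {β : V} (hβR : β ∈ P.R) {s' : V ≃ₗ[ℚ] V} (hs'W : s' ∈ Weyl P)
    (hag : ∀ ρ ∈ P.R, s' ρ = ρ - P.coroot β ρ • β)
    {S : Set (Module.Dual ℚ V)} (hS : S ∈ finAlc P) :
    sAff β (P.coroot β) 0 '' S ∈ finAlc P := by
  have h2 : P.coroot β β = 2 := P.coroot_self β hβR
  obtain ⟨y, hyW, rfl⟩ := hS
  have hymaps := weyl_maps P hyW
  have hs'maps := weyl_maps P hs'W
  have hag' : ∀ ρ ∈ P.R, s' ρ = sref P β ρ := hag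
  have hsymm : ∀ ρ ∈ P.R, s'.symm ρ = sref P β ρ := by
    intro ρ hρ
    rw [LinearEquiv.symm_apply_eq, hag' _ (sref_mem P hβR hρ), sref_invol P hβR]
  have heval : ∀ (v : Module.Dual ℚ V) (x : V),
      sAff β (P.coroot β) 0 v x = v (sref P β x) := by
    intro v x
    rw [sAff_apply']
    simp only [sref, map_sub, map_smul, smul_eq_mul]
    push_cast
    ring
  refine ⟨s' * y, mul_mem hs'W hyW, ?_⟩
  ext z
  constructor
  · rintro ⟨v, ⟨u, hu, rfl⟩, rfl⟩
    refine ⟨dualAct (s' * y)⁻¹ (sAff β (P.coroot β) 0 (dualAct y u)), ?_,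
      dualAct_cancel _ _⟩
    intro δ hδ
    have hyδ : y δ ∈ P.R := hymaps.1 δ (P.pos_subset hδ)
    have e1 : (dualAct (s' * y)⁻¹ (sAff β (P.coroot β) 0 (dualAct y u))) δ =
        (sAff β (P.coroot β) 0 (dualAct y u)) (s' (y δ)) := rfl
    rw [e1, heval, hag' _ hyδ, sref_invol P hβR]
    have e2 : (dualAct y u) (y δ) = u (y.symm (y δ)) := rfl
    rw [e2, LinearEquiv.symm_apply_apply]
    exact hu δ hδ
  · rintro ⟨u', hu', rfl⟩
    refine ⟨sAff β (P.coroot β) 0 (dualAct (s' * y) u'), ⟨dualAct y⁻¹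
      (sAff β (P.coroot β) 0 (dualAct (s' * y) u')), ?_, dualAct_cancel _ _⟩,
      sAff_invol h2 0 _⟩
    intro δ hδ
    have hyδ : y δ ∈ P.R := hymaps.1 δ (P.pos_subset hδ)
    have e1 : (dualAct y⁻¹ (sAff β (P.coroot β) 0 (dualAct (s' * y) u'))) δ =
        (sAff β (P.coroot β) 0 (dualAct (s' * y) u')) (y δ) := rfl
    rw [e1, heval]
    have e2 : (dualAct (s' * y) u') (sref P β (y δ)) =
        u' (y.symm (s'.symm (sref P β (y δ)))) := rfl
    rw [e2, hsymm _ (sref_mem P hβR hyδ), sref_invol P hβR, LinearEquiv.symm_apply_apply]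
    exact hu' δ hδ

/-- Combination: image of a finite alcove under `w₀` followed by `s_{β,0}`-type moves. -/
lemma transfer' {β : V} (hβ : β ∈ P.Rpos) {S : Set (Module.Dual ℚ V)} (hS : S ∈ finAlc P) :
    sAff β (P.coroot β) 0 '' S ∈ finAlc P := by
  obtain ⟨s', hs'W, hag⟩ := refl_weyl P hβ
  exact transfer P (P.pos_subset hβ) hs'W hag hS

lemma transfer'' {β : V} (hβ : β ∈ P.Rpos) {S : Set (Module.Dual ℚ V)}
    (hS : sAff β (P.coroot β) 0 '' S ∈ finAlc P) : S ∈ finAlc P := by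
  have h2 : P.coroot β β = 2 := P.coroot_self β (P.pos_subset hβ)
  have := transfer' P hβ hS
  rwa [sAff_image_invol h2] at this

end Lemmas

/-- `w₀.(β↑A) ∈ 𝒜⁻_{w₀(β)⁺}` iff `A ∈ 𝒜⁻_β`, and
`w₀.(β↑A) ∈ w₀(β)⁺ ↑ 𝒜⁻_{w₀(β)⁺}` iff `A ∈ β ↓ 𝒜⁻_β`. -/
theorem stmt16 {V : Type*} [AddCommGroup V] [Module ℚ V] (P : RootSystemData V)
    (w0 : V ≃ₗ[ℚ] V) (hw0 : w0 ∈ Weyl P)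
    (hlong : ∀ γ ∈ P.Rpos, -(w0 γ) ∈ P.Rpos)
    (hequiv : ∀ γ x : V, P.coroot (w0 γ) x = P.coroot γ (w0.symm x))
    (β : V) (hβ : β ∈ P.Rpos) (A : Set (Module.Dual ℚ V)) (hA : IsAlcove P A) :
    (dualAct w0 '' up P β A ∈ Aminus P (-(w0 β)) ↔ A ∈ Aminus P β) ∧
    (dualAct w0 '' up P β A ∈ (up P (-(w0 β))) '' Aminus P (-(w0 β)) ↔
      A ∈ (down P β) '' Aminus P β) := by
  obtain ⟨hne, d, hAeq⟩ := hA
  set γ := -(w0 β) with hγdef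
  have hγpos : γ ∈ P.Rpos := hlong β hβ
  have hβR : β ∈ P.R := P.pos_subset hβ
  have hγR : γ ∈ P.R := P.pos_subset hγpos
  have h2β : P.coroot β β = 2 := P.coroot_self β hβR
  have h2γ : P.coroot γ γ = 2 := P.coroot_self γ hγR
  set k := d β with hkdef
  have hk : ∀ v ∈ A, (k:ℚ) < v β ∧ v β < k+1 := by
    intro v hv
    rw [hAeq] at hv
    exact hv β hβ
  have hupA : up P β A = sAff β (P.coroot β) (k+1) '' A := by
    rw [up, upIdx_eq hne hk]
  have hupval : ∀ x ∈ up P β A, ((k:ℚ)+1) < x β ∧ x β < (k:ℚ)+2 := by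
    rw [hupA]
    rintro x ⟨v, hv, rfl⟩
    rw [sAff_eval_self h2β]
    obtain ⟨h1, h2⟩ := hk v hv
    constructor <;> push_cast <;> linarith
  -- evaluation of the w0-action at γ
  have hw0γ : ∀ v : Module.Dual ℚ V, dualAct w0 v γ = -(v β) := by
    intro v
    rw [dualAct_apply]
    rw [hγdef, map_neg, LinearEquiv.symm_apply_apply, map_neg]
  set E := dualAct w0 '' up P β A with hEdef
  have hEval : ∀ z ∈ E, (-(k:ℚ)-2) < z γ ∧ z γ < -(k:ℚ)-1 := by
    rintro z ⟨x, hx, rfl⟩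
    rw [hw0γ]
    obtain ⟨h1, h2⟩ := hupval x hx
    constructor <;> linarith
  obtain ⟨v₀, hv₀⟩ := hne
  have hx₀ : sAff β (P.coroot β) (k+1) v₀ ∈ up P β A := by
    rw [hupA]; exact ⟨v₀, hv₀, rfl⟩
  have hz₀ : dualAct w0 (sAff β (P.coroot β) (k+1) v₀) ∈ E := ⟨_, hx₀, rfl⟩
  set z₀ := dualAct w0 (sAff β (P.coroot β) (k+1) v₀) with hz₀def
  -- transfers for k = -1
  have ftrans : k = -1 → (A ∈ finAlc P ↔ E ∈ finAlc P) := by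
    intro hkm
    have hup0 : up P β A = sAff β (P.coroot β) 0 '' A := by
      rw [hupA, hkm]; norm_num
    constructor
    · intro hAfin
      exact finAlc_dualAct P hw0 (hup0 ▸ transfer' P hβ hAfin)
    · intro hEfin
      have hupfin : up P β A ∈ finAlc P := by
        have := finAlc_dualAct P (inv_mem hw0) hEfin
        rwa [hEdef, dualAct_image_cancel] at this
      rw [hup0] at hupfin
      exact transfer'' P hβ hupfin
  constructor
  · -- Statement 1
    constructor
    · rintro ⟨hEfin, hEHm⟩
      have hkm : k = -1 := by
        rcases finAlc_strip P hEfin hγpos with hcase | hcase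
        · exfalso
          have h1 := (hcase z₀ hz₀).1
          have h2 : z₀ γ < ((0:ℤ):ℚ) := hEHm hz₀
          push_cast at h2
          linarith
        · obtain ⟨h1, h2⟩ := hcase z₀ hz₀
          obtain ⟨h3, h4⟩ := hEval z₀ hz₀
          have : -k-2 = (-1 : ℤ) := by
            apply unit_interval_eq (x := z₀ γ) <;> push_cast <;> linarith
          omega
      refine ⟨(ftrans hkm).mpr hEfin, ?_⟩
      intro v hv
      have := (hk v hv).2
      show v β < ((0:ℤ):ℚ)
      rw [hkm] at this
      push_cast at this ⊢
      linarith
    · rintro ⟨hAfin, hAHm⟩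
      have hkm : k = -1 := by
        rcases finAlc_strip P hAfin hβ with hcase | hcase
        · exfalso
          have h1 := (hcase v₀ hv₀).1
          have h2 : v₀ β < ((0:ℤ):ℚ) := hAHm hv₀
          push_cast at h2
          linarith
        · obtain ⟨h1, h2⟩ := hcase v₀ hv₀
          obtain ⟨h3, h4⟩ := hk v₀ hv₀
          apply unit_interval_eq (x := v₀ β) <;> push_cast <;> linarith
      refine ⟨(ftrans hkm).mp hAfin, ?_⟩
      rintro z hz
      obtain ⟨h1, h2⟩ := hEval z hz
      show z γ < ((0:ℤ):ℚ)
      rw [hkm] at h2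
      push_cast at h2 ⊢
      linarith
  · -- Statement 2
    constructor
    · rintro ⟨D, ⟨hDfin, hDHm⟩, hDE⟩
      -- D is nonempty
      have hDne : D.Nonempty := by
        have : z₀ ∈ up P γ D := by rw [hDE]; exact hz₀
        rw [up] at this
        obtain ⟨v, hv, -⟩ := this
        exact ⟨v, hv⟩
      have hDval : ∀ v ∈ D, ((-1 : ℤ):ℚ) < v γ ∧ v γ < (-1:ℤ)+1 := by
        rcases finAlc_strip P hDfin hγpos with hcase | hcase
        · exfalso
          obtain ⟨v, hv⟩ := hDne
          have h1 := (hcase v hv).1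
          have h2 : v γ < ((0:ℤ):ℚ) := hDHm hv
          push_cast at h2
          linarith
        · intro v hv
          obtain ⟨h1, h2⟩ := hcase v hv
          constructor <;> push_cast <;> linarith
      have hupD : up P γ D = sAff γ (P.coroot γ) 0 '' D := by
        rw [up, upIdx_eq hDne hDval]
        norm_num
      have hupDval : ∀ z ∈ up P γ D, (0:ℚ) < z γ ∧ z γ < 1 := by
        rw [hupD]
        rintro z ⟨v, hv, rfl⟩
        rw [sAff_eval_self h2γ]
        obtain ⟨h1, h2⟩ := hDval v hv
        constructor <;> push_cast at h1 h2 ⊢ <;> linarith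
      have hkm : k = -2 := by
        have h1 := hupDval z₀ (by rw [hDE]; exact hz₀)
        obtain ⟨h3, h4⟩ := hEval z₀ hz₀
        have : -k-2 = (0:ℤ) := by
          apply unit_interval_eq (x := z₀ γ) <;> push_cast <;> linarith [h1.1, h1.2]
        omega
      -- C := up P β A works
      have hupm1 : up P β A = sAff β (P.coroot β) (-1) '' A := by
        rw [hupA, hkm]; norm_num
      have hCval : ∀ x ∈ up P β A, ((-1:ℤ):ℚ) < x β ∧ x β < (-1:ℤ)+1 := by
        intro x hx
        obtain ⟨h1, h2⟩ := hupval x hx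
        rw [hkm] at h1 h2
        constructor <;> push_cast at h1 h2 ⊢ <;> linarith
      have hCne : (up P β A).Nonempty := ⟨_, hx₀⟩
      have hCfin : up P β A ∈ finAlc P := by
        have hEfin : E ∈ finAlc P := by
          rw [← hDE, hupD]
          exact transfer' P hγpos hDfin
        have := finAlc_dualAct P (inv_mem hw0) hEfin
        rwa [hEdef, dualAct_image_cancel] at this
      refine ⟨up P β A, ⟨hCfin, ?_⟩, ?_⟩
      · intro x hx
        have := (hCval x hx).2
        show x β < ((0:ℤ):ℚ)
        push_cast at this ⊢
        linarith
      · rw [down, downIdx_eq hCne hCval, hupm1, sAff_image_invol h2β]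
    · rintro ⟨C, ⟨hCfin, hCHm⟩, hCA⟩
      have hCne : C.Nonempty := by
        have : v₀ ∈ down P β C := by rw [hCA]; exact hv₀
        rw [down] at this
        obtain ⟨v, hv, -⟩ := this
        exact ⟨v, hv⟩
      have hCval : ∀ v ∈ C, ((-1:ℤ):ℚ) < v β ∧ v β < (-1:ℤ)+1 := by
        rcases finAlc_strip P hCfin hβ with hcase | hcase
        · exfalso
          obtain ⟨v, hv⟩ := hCne
          have h1 := (hcase v hv).1
          have h2 : v β < ((0:ℤ):ℚ) := hCHm hv
          push_cast at h2
          linarith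
        · intro v hv
          obtain ⟨h1, h2⟩ := hcase v hv
          constructor <;> push_cast <;> linarith
      have hdownC : down P β C = sAff β (P.coroot β) (-1) '' C := by
        rw [down, downIdx_eq hCne hCval]
      have hAval : ∀ v ∈ A, ((-2:ℤ):ℚ) < v β ∧ v β < (-2:ℤ)+1 := by
        intro v hv
        rw [← hCA, hdownC] at hv
        obtain ⟨u, hu, rfl⟩ := hv
        rw [sAff_eval_self h2β]
        obtain ⟨h1, h2⟩ := hCval u hu
        constructor <;> push_cast at h1 h2 ⊢ <;> linarith
      have hkm : k = -2 := by
        obtain ⟨h1, h2⟩ := hk v₀ hv₀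
        obtain ⟨h3, h4⟩ := hAval v₀ hv₀
        push_cast at h3 h4
        exact unit_interval_eq (x := v₀ β) h1 h2 (by push_cast; linarith)
          (by push_cast; linarith)
      have hupC : up P β A = C := by
        rw [hupA, hkm, ← hCA, hdownC]
        have : ((-2:ℤ)+1) = (-1:ℤ) := by norm_num
        rw [this, sAff_image_invol h2β]
      -- E and D
      have hEC : E = dualAct w0 '' C := by rw [hEdef, hupC]
      have hECval : ∀ z ∈ E, ((0:ℤ):ℚ) < z γ ∧ z γ < (0:ℤ)+1 := by
        rw [hEC]
        rintro z ⟨x, hx, rfl⟩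
        rw [hw0γ]
        obtain ⟨h1, h2⟩ := hCval x hx
        constructor <;> push_cast at h1 h2 ⊢ <;> linarith
      set D := sAff γ (P.coroot γ) 0 '' E with hDdef
      have hDfin : D ∈ finAlc P := by
        rw [hDdef, hEC]
        exact transfer' P hγpos (finAlc_dualAct P hw0 hCfin)
      have hDval : ∀ v ∈ D, ((-1:ℤ):ℚ) < v γ ∧ v γ < (-1:ℤ)+1 := by
        rw [hDdef]
        rintro v ⟨z, hz, rfl⟩
        rw [sAff_eval_self h2γ]
        obtain ⟨h1, h2⟩ := hECval z hz
        constructor <;> push_cast at h1 h2 ⊢ <;> linarith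
      have hDne : D.Nonempty := by
        rw [hDdef, hEdef]
        exact ⟨_, Set.mem_image_of_mem _ hz₀⟩
      refine ⟨D, ⟨hDfin, ?_⟩, ?_⟩
      · intro v hv
        have := (hDval v hv).2
        show v γ < ((0:ℤ):ℚ)
        push_cast at this ⊢
        linarith
      · rw [up, upIdx_eq hDne hDval]
        have : ((-1:ℤ)+1) = (0:ℤ) := by norm_num
        rw [this, hDdef, sAff_image_invol h2γ]
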